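/- Let n be a positive integer and let x, y be symmetric n×n complex matrices (xᵀ = x, yᵀ = y) such that I − x xᴴ, I − xᴴ x, and I − y yᴴ are (Hermitian) positive definite and the matrices I − xᴴ y, I − y xᴴ, and I − x yᴴ are invertible. Let φ_x(y) = (I − x xᴴ)^{−1/2} (y − x) (I − xᴴ y)^{−1} (I − xᴴ x)^{1/2}. Then I − φ_x(y) · φ_x(y)ᴴ = (I − x xᴴ)^{1/2} (I − y xᴴ)^{−1} (I − y yᴴ) (I − x yᴴ)^{−1} (I − x xᴴ)^{1/2}. -/

import Mathlib

open Matrix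
open scoped ComplexOrder

/-- The positive semidefinite square root of a positive semidefinite matrix
(the definition `Matrix.PosSemidef.sqrt` of the older Mathlib, since removed). -/
noncomputable def Matrix.PosSemidef.sqrt {n : Type*} [Fintype n] [DecidableEq n]
    {𝕜 : Type*} [RCLike 𝕜] {A : Matrix n n 𝕜} (hA : A.PosSemidef) : Matrix n n 𝕜 :=
  hA.1.eigenvectorUnitary.1 * diagonal ((↑) ∘ (√·) ∘ hA.1.eigenvalues) *
  (star hA.1.eigenvectorUnitary : Matrix n n 𝕜)

lemma Matrix.PosSemidef.sqrt_mul_self {n : ℕ} {A : Matrix (Fin n) (Fin n) ℂ}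
    (hA : A.PosSemidef) : hA.sqrt * hA.sqrt = A := by
  have hU : (star hA.1.eigenvectorUnitary : Matrix (Fin n) (Fin n) ℂ) *
      hA.1.eigenvectorUnitary.1 = 1 := Unitary.star_mul_self_of_mem hA.1.eigenvectorUnitary.2
  have hD : diagonal (((↑) ∘ (√·) ∘ hA.1.eigenvalues) : Fin n → ℂ) *
      diagonal ((↑) ∘ (√·) ∘ hA.1.eigenvalues)
      = diagonal (RCLike.ofReal ∘ hA.1.eigenvalues) := by
    rw [diagonal_mul_diagonal]; congr 1; funext i
    simp only [Function.comp_apply]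
    rw [← Complex.ofReal_mul, Real.mul_self_sqrt (hA.eigenvalues_nonneg i)]; rfl
  conv_rhs => rw [hA.1.spectral_theorem]
  rw [Unitary.conjStarAlgAut_apply, ← hD]
  unfold Matrix.PosSemidef.sqrt
  simp only [Matrix.mul_assoc]
  rw [← Matrix.mul_assoc _ hA.1.eigenvectorUnitary.1, hU, Matrix.one_mul]
  rfl

lemma Matrix.PosSemidef.sqrt_conjTranspose {n : ℕ} {A : Matrix (Fin n) (Fin n) ℂ}
    (hA : A.PosSemidef) : (hA.sqrt)ᴴ = hA.sqrt := by
  unfold Matrix.PosSemidef.sqrt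
  simp [conjTranspose_mul, diagonal_conjTranspose, Matrix.mul_assoc]
  rw [← star_eq_conjTranspose, ← star_eq_conjTranspose, star_star]
  congr 3
  funext i
  simp

private lemma sda_cancel {n : ℕ} (M : Matrix (Fin n) (Fin n) ℂ) (h : IsUnit M.det)
    (Z : Matrix (Fin n) (Fin n) ℂ) : M⁻¹ * (M * Z) = Z := by
  rw [← Matrix.mul_assoc, Matrix.nonsing_inv_mul _ h, Matrix.one_mul]

private lemma sda_cancel' {n : ℕ} (M : Matrix (Fin n) (Fin n) ℂ) (h : IsUnit M.det)
    (Z : Matrix (Fin n) (Fin n) ℂ) : M * (M⁻¹ * Z) = Z := by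
  rw [← Matrix.mul_assoc, Matrix.mul_nonsing_inv _ h, Matrix.one_mul]

private lemma sda_shift {n : ℕ} (u v : Matrix (Fin n) (Fin n) ℂ)
    (hu : IsUnit (1 - u * v)) (hv : IsUnit (1 - v * u)) :
    u * (1 - v * u)⁻¹ = (1 - u * v)⁻¹ * u := by
  have hd1 : IsUnit (1 - u * v).det := (isUnit_iff_isUnit_det _).mp hu
  have hd2 : IsUnit (1 - v * u).det := (isUnit_iff_isUnit_det _).mp hv
  have key : (1 - u * v) * (u * (1 - v * u)⁻¹) = u := by
    calc (1 - u * v) * (u * (1 - v * u)⁻¹)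
        = (u * (1 - v * u)) * (1 - v * u)⁻¹ := by noncomm_ring
      _ = u * ((1 - v * u) * (1 - v * u)⁻¹) := by rw [Matrix.mul_assoc]
      _ = u := by rw [Matrix.mul_nonsing_inv _ hd2, Matrix.mul_one]
  calc u * (1 - v * u)⁻¹
      = ((1 - u * v)⁻¹ * (1 - u * v)) * (u * (1 - v * u)⁻¹) := by
        rw [Matrix.nonsing_inv_mul _ hd1, Matrix.one_mul]
    _ = (1 - u * v)⁻¹ * ((1 - u * v) * (u * (1 - v * u)⁻¹)) := by
        rw [Matrix.mul_assoc]
    _ = (1 - u * v)⁻¹ * u := by rw [key]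

private lemma sda_I2 {n : ℕ} (x s y : Matrix (Fin n) (Fin n) ℂ)
    (hsy : IsUnit (1 - s * y)) (hys : IsUnit (1 - y * s)) :
    (1 - x * s) * (1 - y * s)⁻¹ * (y - x) = (y - x) * (1 - s * y)⁻¹ * (1 - s * x) := by
  have hd1 : IsUnit (1 - s * y).det := (isUnit_iff_isUnit_det _).mp hsy
  have hd2 : IsUnit (1 - y * s).det := (isUnit_iff_isUnit_det _).mp hys
  have hshift : s * (1 - y * s)⁻¹ = (1 - s * y)⁻¹ * s := sda_shift s y hsy hys
  have e1 : (1 - x * s) * (1 - y * s)⁻¹ = 1 + (y - x) * (s * (1 - y * s)⁻¹) := by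
    calc (1 - x * s) * (1 - y * s)⁻¹
        = ((1 - y * s) + (y - x) * s) * (1 - y * s)⁻¹ := by noncomm_ring
      _ = (1 - y * s) * (1 - y * s)⁻¹ + (y - x) * (s * (1 - y * s)⁻¹) := by
          rw [Matrix.add_mul, Matrix.mul_assoc]
      _ = 1 + (y - x) * (s * (1 - y * s)⁻¹) := by rw [Matrix.mul_nonsing_inv _ hd2]
  have e2 : (1 - s * y)⁻¹ * (1 - s * x) = 1 + (1 - s * y)⁻¹ * (s * (y - x)) := by
    calc (1 - s * y)⁻¹ * (1 - s * x)
        = (1 - s * y)⁻¹ * ((1 - s * y) + s * (y - x)) := by noncomm_ring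
      _ = (1 - s * y)⁻¹ * (1 - s * y) + (1 - s * y)⁻¹ * (s * (y - x)) := by
          rw [Matrix.mul_add]
      _ = 1 + (1 - s * y)⁻¹ * (s * (y - x)) := by rw [Matrix.nonsing_inv_mul _ hd1]
  calc (1 - x * s) * (1 - y * s)⁻¹ * (y - x)
      = (1 + (y - x) * (s * (1 - y * s)⁻¹)) * (y - x) := by rw [e1]
    _ = (1 + (y - x) * ((1 - s * y)⁻¹ * s)) * (y - x) := by rw [hshift]
    _ = (y - x) * (1 + (1 - s * y)⁻¹ * (s * (y - x))) := by noncomm_ring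
    _ = (y - x) * ((1 - s * y)⁻¹ * (1 - s * x)) := by rw [← e2]
    _ = (y - x) * (1 - s * y)⁻¹ * (1 - s * x) := by rw [Matrix.mul_assoc]

private lemma sda_I1 {n : ℕ} (x s y t : Matrix (Fin n) (Fin n) ℂ)
    (hsx : IsUnit (1 - s * x)) :
    (1 - y * s) * (1 - x * s)⁻¹ * (1 - x * t)
      = 1 - y * t + (y - x) * (1 - s * x)⁻¹ * (t - s) := by
  have hd1 : IsUnit (1 - s * x).det := (isUnit_iff_isUnit_det _).mp hsx
  set Q : Matrix (Fin n) (Fin n) ℂ := (1 - s * x)⁻¹ with hQdef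
  have hQ1 : (1 - s * x) * Q = 1 := Matrix.mul_nonsing_inv _ hd1
  have hQ2 : Q * (1 - s * x) = 1 := Matrix.nonsing_inv_mul _ hd1
  have hA : s * x * Q = Q - 1 := by
    have h' : Q - s * x * Q = 1 := by
      calc Q - s * x * Q = (1 - s * x) * Q := by noncomm_ring
        _ = 1 := hQ1
    calc s * x * Q = Q - (Q - s * x * Q) := by noncomm_ring
      _ = Q - 1 := by rw [h']
  have hB : Q * (s * x) = Q - 1 := by
    have h' : Q - Q * (s * x) = 1 := by
      calc Q - Q * (s * x) = Q * (1 - s * x) := by noncomm_ring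
        _ = 1 := hQ2
    calc Q * (s * x) = Q - (Q - Q * (s * x)) := by noncomm_ring
      _ = Q - 1 := by rw [h']
  have hC : s * x * Q * (s * x) = Q - 1 - s * x := by
    rw [hA, Matrix.sub_mul, hB, Matrix.one_mul]
  have hP : (1 - x * s)⁻¹ = 1 + x * Q * s := by
    apply Matrix.inv_eq_right_inv
    calc (1 - x * s) * (1 + x * Q * s)
        = 1 + x * Q * s - x * s - x * (s * x * Q) * s := by noncomm_ring
      _ = 1 + x * Q * s - x * s - x * (Q - 1) * s := by rw [hA]
      _ = 1 := by noncomm_ring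
  calc (1 - y * s) * (1 - x * s)⁻¹ * (1 - x * t)
      = (1 - y * s) * (1 + x * Q * s) * (1 - x * t) := by rw [hP]
    _ = 1 + x * Q * s - y * s - y * (s * x * Q) * s - x * t - x * (Q * (s * x)) * t
          + y * (s * x) * t + y * (s * x * Q * (s * x)) * t := by noncomm_ring
    _ = 1 + x * Q * s - y * s - y * (Q - 1) * s - x * t - x * (Q * (s * x)) * t
          + y * (s * x) * t + y * (Q - 1 - s * x) * t := by rw [hC, hA]
    _ = 1 + x * Q * s - y * s - y * (Q - 1) * s - x * t - x * (Q - 1) * t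
          + y * (s * x) * t + y * (Q - 1 - s * x) * t := by rw [hB]
    _ = 1 - y * t + (y - x) * Q * (t - s) := by noncomm_ring

private lemma sda_star {n : ℕ} (x s y t : Matrix (Fin n) (Fin n) ℂ)
    (hxs : IsUnit (1 - x * s)) (hsx : IsUnit (1 - s * x))
    (hsy : IsUnit (1 - s * y)) (hys : IsUnit (1 - y * s))
    (hxt : IsUnit (1 - x * t)) (htx : IsUnit (1 - t * x)) :
    (1 - x * s) - (y - x) * (1 - s * y)⁻¹ * (1 - s * x) * (1 - t * x)⁻¹ * (t - s)
      = (1 - x * s) * (1 - y * s)⁻¹ * (1 - y * t) * (1 - x * t)⁻¹ * (1 - x * s) := by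
  have hdxs : IsUnit (1 - x * s).det := (isUnit_iff_isUnit_det _).mp hxs
  have hdsx : IsUnit (1 - s * x).det := (isUnit_iff_isUnit_det _).mp hsx
  have hdys : IsUnit (1 - y * s).det := (isUnit_iff_isUnit_det _).mp hys
  have hdxt : IsUnit (1 - x * t).det := (isUnit_iff_isUnit_det _).mp hxt
  have h1 : 1 - y * t
      = (1 - y * s) * (1 - x * s)⁻¹ * (1 - x * t)
        - (y - x) * (1 - s * x)⁻¹ * (t - s) := by
    rw [sda_I1 x s y t hsx]; abel
  have h2 := sda_I2 s x t hxt htx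
  have h3 := sda_I2 x s y hsy hys
  have hT1 : (1 - x * s) * (1 - y * s)⁻¹ * ((1 - y * s) * (1 - x * s)⁻¹ * (1 - x * t))
      * (1 - x * t)⁻¹ * (1 - x * s) = 1 - x * s := by
    simp only [Matrix.mul_assoc]
    rw [sda_cancel (1 - y * s) hdys, sda_cancel' (1 - x * s) hdxs,
      sda_cancel' (1 - x * t) hdxt]
  have hT2 : (1 - x * s) * (1 - y * s)⁻¹ * ((y - x) * (1 - s * x)⁻¹ * (t - s))
      * (1 - x * t)⁻¹ * (1 - x * s)
      = (y - x) * (1 - s * y)⁻¹ * (1 - s * x) * (1 - t * x)⁻¹ * (t - s) := by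
    calc (1 - x * s) * (1 - y * s)⁻¹ * ((y - x) * (1 - s * x)⁻¹ * (t - s))
          * (1 - x * t)⁻¹ * (1 - x * s)
        = ((1 - x * s) * (1 - y * s)⁻¹ * (y - x))
            * ((1 - s * x)⁻¹ * ((t - s) * (1 - x * t)⁻¹ * (1 - x * s))) := by
          simp only [Matrix.mul_assoc]
      _ = ((y - x) * (1 - s * y)⁻¹ * (1 - s * x))
            * ((1 - s * x)⁻¹ * ((1 - s * x) * (1 - t * x)⁻¹ * (t - s))) := by
          rw [h3, ← h2]
      _ = (y - x) * (1 - s * y)⁻¹ * (1 - s * x) * (1 - t * x)⁻¹ * (t - s) := by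
          simp only [Matrix.mul_assoc]
          rw [sda_cancel' (1 - s * x) hdsx]
  symm
  calc (1 - x * s) * (1 - y * s)⁻¹ * (1 - y * t) * (1 - x * t)⁻¹ * (1 - x * s)
      = (1 - x * s) * (1 - y * s)⁻¹ * ((1 - y * s) * (1 - x * s)⁻¹ * (1 - x * t))
          * (1 - x * t)⁻¹ * (1 - x * s)
        - (1 - x * s) * (1 - y * s)⁻¹ * ((y - x) * (1 - s * x)⁻¹ * (t - s))
          * (1 - x * t)⁻¹ * (1 - x * s) := by
        rw [h1, Matrix.mul_sub ((1 - x * s) * (1 - y * s)⁻¹),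
          Matrix.sub_mul _ _ ((1 - x * t)⁻¹), Matrix.sub_mul _ _ (1 - x * s)]
    _ = (1 - x * s) - (y - x) * (1 - s * y)⁻¹ * (1 - s * x) * (1 - t * x)⁻¹ * (t - s) := by
        rw [hT1, hT2]

/-- Lemma C.2: with `z = φ_x(y) = (I - x xᴴ)^{-1/2} (y - x) (I - xᴴ y)⁻¹ (I - xᴴ x)^{1/2}`,
`I - z zᴴ = (I - x xᴴ)^{1/2} (I - y xᴴ)⁻¹ (I - y yᴴ) (I - x yᴴ)⁻¹ (I - x xᴴ)^{1/2}`. -/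
theorem siegel_disk_automorphism_identity {n : ℕ} (hn : 0 < n)
    (x y : Matrix (Fin n) (Fin n) ℂ)
    (hxs : xᵀ = x) (hys : yᵀ = y)
    (h1 : (1 - x * xᴴ).PosDef) (h2 : (1 - xᴴ * x).PosDef) (h3 : (1 - y * yᴴ).PosDef)
    (h4 : IsUnit (1 - xᴴ * y)) (h5 : IsUnit (1 - y * xᴴ)) (h6 : IsUnit (1 - x * yᴴ)) :
    1 - ((h1.posSemidef.sqrt)⁻¹ * (y - x) * (1 - xᴴ * y)⁻¹ * h2.posSemidef.sqrt) *
        ((h1.posSemidef.sqrt)⁻¹ * (y - x) * (1 - xᴴ * y)⁻¹ * h2.posSemidef.sqrt)ᴴ =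
      h1.posSemidef.sqrt * (1 - y * xᴴ)⁻¹ * (1 - y * yᴴ) * (1 - x * yᴴ)⁻¹ *
        h1.posSemidef.sqrt := by
  set A : Matrix (Fin n) (Fin n) ℂ := h1.posSemidef.sqrt with hAdef
  set B : Matrix (Fin n) (Fin n) ℂ := h2.posSemidef.sqrt with hBdef
  have hAA : A * A = 1 - x * xᴴ := h1.posSemidef.sqrt_mul_self
  have hBB : B * B = 1 - xᴴ * x := h2.posSemidef.sqrt_mul_self
  have hAH : Aᴴ = A := h1.posSemidef.sqrt_conjTranspose
  have hBH : Bᴴ = B := h2.posSemidef.sqrt_conjTranspose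
  have hdA : IsUnit A.det := by
    have h : IsUnit (A * A).det := by
      rw [hAA]; exact (isUnit_iff_isUnit_det _).mp h1.isUnit
    rw [Matrix.det_mul] at h
    exact isUnit_of_mul_isUnit_left h
  have htx : IsUnit (1 - yᴴ * x) := by
    have e : (1 - xᴴ * y)ᴴ = 1 - yᴴ * x := by
      simp [conjTranspose_sub, conjTranspose_mul]
    rw [isUnit_iff_isUnit_det, ← e, Matrix.det_conjTranspose]
    exact ((isUnit_iff_isUnit_det _).mp h4).star
  have hAinvH : (A⁻¹)ᴴ = A⁻¹ := by
    rw [Matrix.conjTranspose_nonsing_inv, hAH]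
  have hzH : (A⁻¹ * (y - x) * (1 - xᴴ * y)⁻¹ * B)ᴴ
      = B * ((1 - yᴴ * x)⁻¹ * ((yᴴ - xᴴ) * A⁻¹)) := by
    simp only [conjTranspose_mul, Matrix.conjTranspose_nonsing_inv, conjTranspose_sub,
      conjTranspose_one, conjTranspose_conjTranspose, hAH, hBH, Matrix.mul_assoc]
  have hBmul : ∀ W : Matrix (Fin n) (Fin n) ℂ, B * (B * W) = (1 - xᴴ * x) * W := by
    intro W; rw [← Matrix.mul_assoc, hBB]
  have hcore : A⁻¹ * (1 - x * xᴴ) * A⁻¹ = 1 := by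
    rw [← hAA, ← Matrix.mul_assoc, Matrix.nonsing_inv_mul _ hdA, Matrix.one_mul,
      Matrix.mul_nonsing_inv _ hdA]
  have step2 : ∀ G : Matrix (Fin n) (Fin n) ℂ,
      A⁻¹ * ((1 - x * xᴴ) - G) * A⁻¹ = 1 - A⁻¹ * G * A⁻¹ := by
    intro G
    rw [Matrix.mul_sub A⁻¹ (1 - x * xᴴ) G, Matrix.sub_mul _ _ A⁻¹, hcore]
  calc 1 - (A⁻¹ * (y - x) * (1 - xᴴ * y)⁻¹ * B) * (A⁻¹ * (y - x) * (1 - xᴴ * y)⁻¹ * B)ᴴ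
      = 1 - A⁻¹ * ((y - x) * ((1 - xᴴ * y)⁻¹ * ((1 - xᴴ * x)
          * ((1 - yᴴ * x)⁻¹ * ((yᴴ - xᴴ) * A⁻¹))))) := by
        rw [hzH]
        simp only [Matrix.mul_assoc]
        rw [hBmul]
    _ = A⁻¹ * ((1 - x * xᴴ)
          - (y - x) * (1 - xᴴ * y)⁻¹ * (1 - xᴴ * x) * (1 - yᴴ * x)⁻¹ * (yᴴ - xᴴ)) * A⁻¹ := by
        rw [step2]
        simp only [Matrix.mul_assoc]
    _ = A⁻¹ * ((1 - x * xᴴ) * (1 - y * xᴴ)⁻¹ * (1 - y * yᴴ) * (1 - x * yᴴ)⁻¹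
          * (1 - x * xᴴ)) * A⁻¹ := by
        rw [sda_star x xᴴ y yᴴ h1.isUnit h2.isUnit h4 h5 h6 htx]
    _ = A * (1 - y * xᴴ)⁻¹ * (1 - y * yᴴ) * (1 - x * yᴴ)⁻¹ * A := by
        rw [← hAA]
        simp only [Matrix.mul_assoc]
        rw [sda_cancel A hdA, Matrix.mul_nonsing_inv _ hdA, Matrix.mul_one]
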